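/- The chordal cubic threefold X = {x1*x4^2 + x2^2*x5 - x1*x3*x5 - 2*x2*x3*x4 + x3^3 = 0} in P^4 over an algebraically closed field of characteristic zero is singular precisely along the image of the rational normal quartic curve [1:t:t^2:t^3:t^4] (together with [0:0:0:0:1]); i.e., a point p of X is a singular point of X if and only if p lies on this curve. -/

import Mathlib

/-- The chordal cubic threefold `x1*x4^2 + x2^2*x5 - x1*x3*x5 - 2*x2*x3*x4 + x3^3 = 0`
in `ℙ^4` over an algebraically closed field of characteristic zero is singular precisely
along the rational normal quartic curve `[s^4 : s^3 t : s^2 t^2 : s t^3 : t^4]`. -/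
theorem chordal_cubic_singular_locus (k : Type*) [Field k] [IsAlgClosed k] [CharZero k]
    (v : Fin 5 → k) (hv : v ≠ 0)
    (hX : v 0 * (v 3)^2 + (v 1)^2 * v 4 - v 0 * v 2 * v 4
      - 2 * v 1 * v 2 * v 3 + (v 2)^3 = 0) :
    ((v 3)^2 - v 2 * v 4 = 0 ∧
     2 * v 1 * v 4 - 2 * v 2 * v 3 = 0 ∧
     -(v 0 * v 4) - 2 * v 1 * v 3 + 3 * (v 2)^2 = 0 ∧
     2 * v 0 * v 3 - 2 * v 1 * v 2 = 0 ∧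
     (v 1)^2 - v 0 * v 2 = 0)
    ↔ ∃ s t : k, (s ≠ 0 ∨ t ≠ 0) ∧ ∃ lam : k, lam ≠ 0 ∧
        v = lam • ![s^4, s^3 * t, s^2 * t^2, s * t^3, t^4] := by
  constructor
  · rintro ⟨h1, h2, h3, h4, h5⟩
    by_cases h0 : v 0 = 0
    · have hv1 : v 1 = 0 := by
        have : v 1 ^ 2 = 0 := by linear_combination h5 + v 2 * h0
        exact pow_eq_zero_iff (by norm_num) |>.mp this
      have hv2 : v 2 = 0 := by
        have h32 : (3 : k) * v 2 ^ 2 = 0 := by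
          linear_combination h3 + v 4 * h0 + 2 * v 3 * hv1
        have : v 2 ^ 2 = 0 :=
          (mul_eq_zero.mp h32).resolve_left (by norm_num)
        exact pow_eq_zero_iff (by norm_num) |>.mp this
      have hv3 : v 3 = 0 := by
        have : v 3 ^ 2 = 0 := by linear_combination h1 + v 4 * hv2
        exact pow_eq_zero_iff (by norm_num) |>.mp this
      have hv4 : v 4 ≠ 0 := by
        intro h
        apply hv
        funext i
        fin_cases i <;> simpa using (by assumption : _)
      refine ⟨0, 1, Or.inr one_ne_zero, v 4, hv4, ?_⟩
      funext i
      fin_cases i <;>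
        simp [h0, hv1, hv2, hv3, Matrix.cons_val_zero, Matrix.cons_val_one, Matrix.head_cons]
    · have e1 : v 0 * v 2 = v 1 ^ 2 := by linear_combination -h5
      have e2 : v 0 ^ 2 * v 3 = v 1 ^ 3 := by
        linear_combination (v 0 / 2) * h4 + v 1 * e1
      have e3 : v 0 ^ 3 * v 4 = v 1 ^ 4 := by
        linear_combination (-(v 0 ^ 2)) * h3 + (-2 * v 1) * e2 + 3 * (v 0 * v 2 + v 1 ^ 2) * e1
      refine ⟨1, v 1 / v 0, Or.inl one_ne_zero, v 0, h0, ?_⟩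
      funext i
      fin_cases i <;>
        simp only [Fin.isValue, Pi.smul_apply, Matrix.cons_val_zero, Matrix.cons_val_one,
          Matrix.head_cons, Matrix.cons_val_two, Matrix.tail_cons, Matrix.cons_val_three,
          Matrix.cons_val_four, smul_eq_mul]
      · show v 0 = v 0 * 1 ^ 4
        ring
      · show v 1 = v 0 * (1 ^ 3 * (v 1 / v 0))
        field_simp
      · show v 2 = v 0 * (1 ^ 2 * (v 1 / v 0) ^ 2)
        field_simp
        linear_combination e1
      · show v 3 = v 0 * (1 * (v 1 / v 0) ^ 3)
        field_simp
        linear_combination e2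
      · show v 4 = v 0 * (v 1 / v 0) ^ 4
        field_simp
        linear_combination e3
  · rintro ⟨s, t, hst, lam, hlam, rfl⟩
    refine ⟨?_, ?_, ?_, ?_, ?_⟩ <;>
      simp only [Pi.smul_apply, Matrix.cons_val_zero, Matrix.cons_val_one, Matrix.head_cons,
        Matrix.cons_val_two, Matrix.tail_cons, Matrix.cons_val_three, Matrix.cons_val_four,
        smul_eq_mul] <;> ring
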